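/- arXiv:1710.11579 — 4 statements merged into one kernel-verified Lean document; each statement's English description precedes it below -/
import Mathlib

section
/- For all i, j ∈ ℤ, the operators t_i on V_F satisfy the Clifford relations: t_i ∘ t_i = 0; t_i ∘ t_j + t_j ∘ t_i = 0 whenever |i−j| > 1; and t_i ∘ t_{i+1} + t_{i+1} ∘ t_i = id_{V_F}. -/
/-- The defining property of the set `𝓘𝓜`: strictly increasing sequences of even
integers which eventually satisfy `x_i = 2i + 2k` for some charge `k ∈ ℤ`. -/
def IMprop (x : ℕ → ℤ) : Prop :=
  StrictMono x ∧ (∀ i, Even (x i)) ∧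
    ∃ k : ℤ, ∃ N : ℕ, ∀ i : ℕ, N ≤ i → x i = 2 * ((i : ℤ) + 1) + 2 * k

/-- The set `𝓘𝓜` of basis sequences (`0`-based indexing: entry `i` is `x_{i+1}`). -/
def IM : Type := {x : ℕ → ℤ // IMprop x}

/-- The fermionic Fock space `V_F`, the free abelian group on the basis `𝓘𝓜`. -/
abbrev VF : Type := IM →₀ ℤ

lemma IM.exists_ge (x : IM) (m : ℤ) : ∃ N : ℕ, m ≤ x.1 N := by
  obtain ⟨-, -, k, N, hN⟩ := x.2
  refine ⟨N + (m - x.1 N).toNat, ?_⟩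
  have h1 := hN N le_rfl
  have h2 := hN (N + (m - x.1 N).toNat) (Nat.le_add_right _ _)
  have h3 : (m - x.1 N) ≤ ((m - x.1 N).toNat : ℤ) := Int.self_le_toNat _
  have h4 : (0 : ℤ) ≤ ((m - x.1 N).toNat : ℤ) := Int.natCast_nonneg _
  push_cast at h2
  omega

/-- The position where `2j` is to be inserted into (or found in) `x`: the least
index `N` with `2j ≤ x N`, i.e. the number of entries of `x` smaller than `2j`. -/
def posIdx (j : ℤ) (x : IM) : ℕ := Nat.find (IM.exists_ge x (2 * j))

lemma posIdx_le (j : ℤ) (x : IM) : 2 * j ≤ x.1 (posIdx j x) :=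
  Nat.find_spec (IM.exists_ge x (2 * j))

lemma posIdx_lt (j : ℤ) (x : IM) : ∀ i, i < posIdx j x → x.1 i < 2 * j := by
  intro i hi
  have := Nat.find_min (IM.exists_ge x (2 * j)) hi
  omega

/-- Insertion of a value `a` into a sequence at position `p`. -/
def insSeq (x : ℕ → ℤ) (p : ℕ) (a : ℤ) : ℕ → ℤ :=
  fun i => if i < p then x i else if i = p then a else x (i - 1)

/-- Deletion of the entry at position `p` of a sequence. -/
def delSeq (x : ℕ → ℤ) (p : ℕ) : ℕ → ℤ :=
  fun i => if i < p then x i else x (i + 1)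

lemma insSeq_mem (x : ℕ → ℤ) (hx : IMprop x) (p : ℕ) (a : ℤ) (ha : Even a)
    (hlow : ∀ i, i < p → x i < a) (hhigh : a < x p) :
    IMprop (insSeq x p a) := by
  obtain ⟨hm, he, k, N, hN⟩ := hx
  refine ⟨strictMono_nat_of_lt_succ ?_, ?_, k - 1, max N p + 1, ?_⟩
  · intro i
    by_cases h1 : i + 1 < p
    · have hi : i < p := by omega
      simp only [insSeq, if_pos hi, if_pos h1]
      exact hm (Nat.lt_succ_self i)
    · by_cases h2 : i + 1 = p
      · have hi : i < p := by omega
        simp only [insSeq, if_pos hi, if_neg h1, if_pos h2]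
        exact hlow i hi
      · by_cases h3 : i = p
        · have hnl : ¬ i < p := by omega
          simp only [insSeq, if_neg hnl, if_pos h3, if_neg h1, if_neg h2]
          have e1 : i + 1 - 1 = i := by omega
          rw [e1, h3]
          exact hhigh
        · have hnl : ¬ i < p := by omega
          simp only [insSeq, if_neg hnl, if_neg h3, if_neg h1, if_neg h2]
          have e1 : i + 1 - 1 = i := by omega
          rw [e1]
          exact hm (by omega : i - 1 < i)
  · intro i
    by_cases h1 : i < p
    · simpa [insSeq, if_pos h1] using he i
    · by_cases h2 : i = p
      · simpa [insSeq, h1, h2] using ha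
      · simpa [insSeq, h1, h2] using he (i - 1)
  · intro i hi
    have h1 : ¬ i < p := by omega
    have h2 : ¬ i = p := by omega
    simp only [insSeq, if_neg h1, if_neg h2]
    rw [hN (i - 1) (by omega)]
    rw [Nat.cast_sub (by omega : 1 ≤ i)]
    push_cast
    ring

lemma delSeq_mem (x : ℕ → ℤ) (hx : IMprop x) (p : ℕ) : IMprop (delSeq x p) := by
  obtain ⟨hm, he, k, N, hN⟩ := hx
  refine ⟨strictMono_nat_of_lt_succ ?_, ?_, k + 1, max N p, ?_⟩
  · intro i
    by_cases h1 : i + 1 < p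
    · simp only [delSeq, if_pos (by omega : i < p), if_pos h1]
      exact hm (Nat.lt_succ_self i)
    · by_cases h2 : i < p
      · simp only [delSeq, if_pos h2, if_neg h1]
        exact hm (by omega : i < i + 1 + 1)
      · simp only [delSeq, if_neg h2, if_neg h1]
        exact hm (by omega : i + 1 < i + 1 + 1)
  · intro i
    by_cases h1 : i < p
    · simpa [delSeq, h1] using he i
    · simpa [delSeq, h1] using he (i + 1)
  · intro i hi
    simp only [delSeq, if_neg (by omega : ¬ i < p)]
    rw [hN (i + 1) (by omega)]
    push_cast
    ring

/-- The creating operator `ψ_j` on a basis element: zero if `2j` occurs in `x`,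
and otherwise `(−1)^n` times the basis element obtained by inserting `2j`,
where `n` is the number of entries of `x` smaller than `2j`. -/
noncomputable def psiB (j : ℤ) (x : IM) : VF :=
  if h : x.1 (posIdx j x) = 2 * j then 0
  else ((-1 : ℤ) ^ (posIdx j x)) •
    Finsupp.single (⟨insSeq x.1 (posIdx j x) (2 * j),
      insSeq_mem x.1 x.2 (posIdx j x) (2 * j) (even_two_mul j) (posIdx_lt j x)
        (lt_of_le_of_ne (posIdx_le j x) (fun hh => h hh.symm))⟩ : IM) 1

/-- The annihilating operator `ψ_j^*` on a basis element: zero if `2j` does not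
occur in `x`, and otherwise `(−1)^{n−1}` times the basis element obtained by
deleting the entry `x_n = 2j`. -/
noncomputable def psiStarB (j : ℤ) (x : IM) : VF :=
  if _ : x.1 (posIdx j x) = 2 * j then
    ((-1 : ℤ) ^ (posIdx j x)) •
      Finsupp.single (⟨delSeq x.1 (posIdx j x), delSeq_mem x.1 x.2 (posIdx j x)⟩ : IM) 1
  else 0

/-- The creating operator `ψ_j : V_F → V_F`. -/
noncomputable def psiOp (j : ℤ) : VF →ₗ[ℤ] VF := Finsupp.lift VF ℤ IM (psiB j)

/-- The annihilating operator `ψ_j^* : V_F → V_F`. -/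
noncomputable def psiStarOp (j : ℤ) : VF →ₗ[ℤ] VF := Finsupp.lift VF ℤ IM (psiStarB j)

/-- The Clifford operators: `t_{2j} = ψ_j` and `t_{2j−1} = ψ_j^* + ψ_{j−1}^*`. -/
noncomputable def tOp (m : ℤ) : VF →ₗ[ℤ] VF :=
  if m % 2 = 0 then psiOp (m / 2)
  else psiStarOp ((m + 1) / 2) + psiStarOp ((m + 1) / 2 - 1)

lemma posIdx_unique (j : ℤ) (x : IM) (q : ℕ) (h1 : 2 * j ≤ x.1 q)
    (h2 : ∀ i, i < q → x.1 i < 2 * j) : posIdx j x = q := by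
  have hle : posIdx j x ≤ q := Nat.find_le h1
  rcases Nat.lt_or_ge (posIdx j x) q with h | h
  · have := h2 _ h
    have := posIdx_le j x
    omega
  · omega

lemma posIdx_of_mem (j : ℤ) (x : IM) (n : ℕ) (h : x.1 n = 2 * j) :
    posIdx j x = n :=
  posIdx_unique j x n (le_of_eq h.symm) (fun i hi => h ▸ x.2.1 hi)

lemma not_mem_of_posIdx (j : ℤ) (x : IM) (h : x.1 (posIdx j x) ≠ 2 * j) :
    ∀ n, x.1 n ≠ 2 * j := fun n hn => h (by rw [posIdx_of_mem j x n hn]; exact hn)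

lemma ins_ins (x : ℕ → ℤ) (p q : ℕ) (a b : ℤ) (h : p ≤ q) :
    insSeq (insSeq x q b) p a = insSeq (insSeq x p a) (q + 1) b := by
  funext i
  simp only [insSeq]
  split_ifs <;> first | rfl | (exfalso; omega) | (congr 1; omega)

lemma del_del (x : ℕ → ℤ) (p q : ℕ) (h : p ≤ q) :
    delSeq (delSeq x (q + 1)) p = delSeq (delSeq x p) q := by
  funext i
  simp only [delSeq]
  split_ifs <;> first | rfl | (exfalso; omega) | (congr 1; omega)

lemma del_ins (x : ℕ → ℤ) (p : ℕ) (a : ℤ) : delSeq (insSeq x p a) p = x := by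
  funext i
  simp only [delSeq, insSeq]
  split_ifs <;> first | rfl | (exfalso; omega) | (congr 1; omega)

lemma ins_del (x : ℕ → ℤ) (p : ℕ) : insSeq (delSeq x p) p (x p) = x := by
  funext i
  simp only [delSeq, insSeq]
  split_ifs with h1 h2 <;> first | rfl | (exfalso; omega) | (congr 1; omega) | (rw [h2])

lemma del_ins_ge (x : ℕ → ℤ) (p q : ℕ) (a : ℤ) (h : p ≤ q) :
    delSeq (insSeq x p a) (q + 1) = insSeq (delSeq x q) p a := by
  funext i
  simp only [delSeq, insSeq]
  split_ifs <;> first | rfl | (exfalso; omega) | (congr 1; omega)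

lemma del_ins_lt (x : ℕ → ℤ) (p q : ℕ) (a : ℤ) (h : q < p) :
    delSeq (insSeq x p a) q = insSeq (delSeq x q) (p - 1) a := by
  funext i
  simp only [delSeq, insSeq]
  split_ifs <;> first | rfl | (exfalso; omega) | (congr 1; omega)

lemma psiOp_single (j : ℤ) (x : IM) : psiOp j (Finsupp.single x 1) = psiB j x := by
  simp [psiOp, Finsupp.lift_apply, Finsupp.sum_single_index]

lemma psiStarOp_single (j : ℤ) (x : IM) :
    psiStarOp j (Finsupp.single x 1) = psiStarB j x := by
  simp [psiStarOp, Finsupp.lift_apply, Finsupp.sum_single_index]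
lemma psiB_zero (j : ℤ) (x : IM) (n : ℕ) (h : x.1 n = 2 * j) : psiB j x = 0 := by
  rw [psiB, dif_pos (by rw [posIdx_of_mem j x n h]; exact h)]

lemma psiStarB_zero (j : ℤ) (x : IM) (h : ∀ n, x.1 n ≠ 2 * j) : psiStarB j x = 0 := by
  rw [psiStarB, dif_neg (h _)]

lemma psiB_eq_single (j : ℤ) (x : IM) (q : ℕ) (hq1 : 2 * j ≤ x.1 q)
    (hq2 : ∀ i, i < q → x.1 i < 2 * j) (hne : x.1 q ≠ 2 * j) (y : IM)
    (hy : y.1 = insSeq x.1 q (2 * j)) :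
    psiB j x = ((-1 : ℤ) ^ q) • Finsupp.single y 1 := by
  have hp : posIdx j x = q := posIdx_unique j x q hq1 hq2
  rw [psiB, dif_neg (by rw [hp]; exact hne)]
  congr 1
  · rw [hp]
  · refine congrArg (fun z => Finsupp.single z 1) (Subtype.ext ?_)
    show insSeq x.1 (posIdx j x) (2 * j) = y.1
    rw [hp, hy]

lemma psiStarB_eq_single (j : ℤ) (x : IM) (q : ℕ) (hq : x.1 q = 2 * j) (y : IM)
    (hy : y.1 = delSeq x.1 q) :
    psiStarB j x = ((-1 : ℤ) ^ q) • Finsupp.single y 1 := by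
  have hp : posIdx j x = q := posIdx_of_mem j x q hq
  rw [psiStarB, dif_pos (by rw [hp]; exact hq)]
  congr 1
  · rw [hp]
  · refine congrArg (fun z => Finsupp.single z 1) (Subtype.ext ?_)
    show delSeq x.1 (posIdx j x) = y.1
    rw [hp, hy]
lemma psi_psi_aux (a b : ℤ) (hab : a ≤ b) (x : IM) :
    psiOp a (psiB b x) + psiOp b (psiB a x) = 0 := by
  by_cases hb : x.1 (posIdx b x) = 2 * b
  · -- 2b occurs in x
    rw [psiB_zero b x _ hb, map_zero, zero_add]
    by_cases ha : x.1 (posIdx a x) = 2 * a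
    · rw [psiB_zero a x _ ha, map_zero]
    · set p := posIdx a x with hpdef
      set q := posIdx b x with hqdef
      have hY : IMprop (insSeq x.1 p (2 * a)) :=
        insSeq_mem x.1 x.2 p (2 * a) (even_two_mul a) (posIdx_lt a x)
          (lt_of_le_of_ne (posIdx_le a x) (Ne.symm ha))
      erw [psiB_eq_single a x p (posIdx_le a x) (posIdx_lt a x) ha ⟨_, hY⟩ rfl,
          map_smul, psiOp_single]
      by_cases hqp : q < p
      · have hmem : (⟨insSeq x.1 p (2 * a), hY⟩ : IM).1 q = 2 * b := by
          simpa only [insSeq, if_pos hqp] using hb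
        rw [psiB_zero b _ q hmem, smul_zero]
      · have hmem : (⟨insSeq x.1 p (2 * a), hY⟩ : IM).1 (q + 1) = 2 * b := by
          show insSeq x.1 p (2 * a) (q + 1) = 2 * b
          simp only [insSeq, if_neg (show ¬ q + 1 < p by omega),
            if_neg (show ¬ q + 1 = p by omega), Nat.add_sub_cancel]
          exact hb
        rw [psiB_zero b _ (q + 1) hmem, smul_zero]
  · by_cases ha : x.1 (posIdx a x) = 2 * a
    · -- 2a occurs in x, 2b does not
      rw [psiB_zero a x _ ha, map_zero, add_zero]
      set p := posIdx a x with hpdef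
      set q := posIdx b x with hqdef
      have hY : IMprop (insSeq x.1 q (2 * b)) :=
        insSeq_mem x.1 x.2 q (2 * b) (even_two_mul b) (posIdx_lt b x)
          (lt_of_le_of_ne (posIdx_le b x) (Ne.symm hb))
      erw [psiB_eq_single b x q (posIdx_le b x) (posIdx_lt b x) hb ⟨_, hY⟩ rfl,
          map_smul, psiOp_single]
      by_cases hpq : p < q
      · have hmem : (⟨insSeq x.1 q (2 * b), hY⟩ : IM).1 p = 2 * a := by
          simpa only [insSeq, if_pos hpq] using ha
        rw [psiB_zero a _ p hmem, smul_zero]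
      · have hmem : (⟨insSeq x.1 q (2 * b), hY⟩ : IM).1 (p + 1) = 2 * a := by
          show insSeq x.1 q (2 * b) (p + 1) = 2 * a
          simp only [insSeq, if_neg (show ¬ p + 1 < q by omega),
            if_neg (show ¬ p + 1 = q by omega), Nat.add_sub_cancel]
          exact ha
        rw [psiB_zero a _ (p + 1) hmem, smul_zero]
    · -- neither occurs
      set p := posIdx a x with hpdef
      set q := posIdx b x with hqdef
      have hY : IMprop (insSeq x.1 q (2 * b)) :=
        insSeq_mem x.1 x.2 q (2 * b) (even_two_mul b) (posIdx_lt b x)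
          (lt_of_le_of_ne (posIdx_le b x) (Ne.symm hb))
      have hZ : IMprop (insSeq x.1 p (2 * a)) :=
        insSeq_mem x.1 x.2 p (2 * a) (even_two_mul a) (posIdx_lt a x)
          (lt_of_le_of_ne (posIdx_le a x) (Ne.symm ha))
      erw [psiB_eq_single b x q (posIdx_le b x) (posIdx_lt b x) hb ⟨_, hY⟩ rfl,
          psiB_eq_single a x p (posIdx_le a x) (posIdx_lt a x) ha ⟨_, hZ⟩ rfl,
          map_smul, map_smul, psiOp_single, psiOp_single]
      rcases eq_or_lt_of_le hab with rfl | hlt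
      · -- a = b : the insert contains 2a, so both terms vanish
        have hmem : (⟨insSeq x.1 q (2 * a), hY⟩ : IM).1 q = 2 * a := by
          show insSeq x.1 q (2 * a) q = 2 * a
          simp [insSeq]
        rw [psiB_zero a ⟨_, hY⟩ q hmem]
        simp
      · -- a < b, hence p ≤ q
        have h2ab : 2 * a < 2 * b := by omega
        have hpq : p ≤ q := Nat.find_le (le_trans (le_of_lt h2ab) (posIdx_le b x))
        -- the common result W
        have hWlow : ∀ i, i < p → insSeq x.1 q (2 * b) i < 2 * a := by
          intro i hi
          simp only [insSeq, if_pos (show i < q by omega)]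
          exact posIdx_lt a x i hi
        have hWhigh : 2 * a < insSeq x.1 q (2 * b) p := by
          simp only [insSeq]
          split_ifs with h1 h2
          · exact lt_of_le_of_ne (posIdx_le a x) (Ne.symm ha)
          · exact h2ab
          · omega
        have hW : IMprop (insSeq (insSeq x.1 q (2 * b)) p (2 * a)) :=
          insSeq_mem _ hY p (2 * a) (even_two_mul a) hWlow hWhigh
        -- first term: insert 2b at q, then 2a; position of a in Y is p
        rw [psiB_eq_single a ⟨_, hY⟩ p (le_of_lt hWhigh) hWlow (Ne.symm (ne_of_lt hWhigh))
            ⟨_, hW⟩ rfl]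
        -- second term: insert 2a at p, then 2b at q+1
        have hZhigh : 2 * b ≤ insSeq x.1 p (2 * a) (q + 1) := by
          simp only [insSeq, if_neg (show ¬ q + 1 < p by omega),
            if_neg (show ¬ q + 1 = p by omega), Nat.add_sub_cancel]
          exact posIdx_le b x
        have hZne : insSeq x.1 p (2 * a) (q + 1) ≠ 2 * b := by
          simp only [insSeq, if_neg (show ¬ q + 1 < p by omega),
            if_neg (show ¬ q + 1 = p by omega), Nat.add_sub_cancel]
          exact hb
        have hZlow : ∀ i, i < q + 1 → insSeq x.1 p (2 * a) i < 2 * b := by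
          intro i hi
          simp only [insSeq]
          split_ifs with h1 h2
          · exact lt_trans (posIdx_lt a x i h1) h2ab
          · exact h2ab
          · exact posIdx_lt b x (i - 1) (by omega)
        rw [psiB_eq_single b ⟨_, hZ⟩ (q + 1) hZhigh hZlow hZne
            ⟨_, hW⟩ (ins_ins x.1 p q (2*a) (2*b) hpq)]
        rw [smul_smul, smul_smul, ← add_smul,
          show (-1:ℤ)^q * (-1)^p + (-1)^p * (-1)^(q+1) = 0 by rw [pow_succ]; ring,
          zero_smul]
lemma delSeq_not_mem (x : IM) (p : ℕ) (c : ℤ) (h : ∀ n, x.1 n ≠ c) :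
    ∀ n, delSeq x.1 p n ≠ c := by
  intro n
  simp only [delSeq]
  split_ifs
  · exact h n
  · exact h (n + 1)

lemma star_star_aux (a b : ℤ) (hab : a ≤ b) (x : IM) :
    psiStarOp a (psiStarB b x) + psiStarOp b (psiStarB a x) = 0 := by
  by_cases hb : x.1 (posIdx b x) = 2 * b
  · by_cases ha : x.1 (posIdx a x) = 2 * a
    · rcases eq_or_lt_of_le hab with rfl | hlt
      · -- a = b : deleting once removes the only occurrence
        have hnot : ∀ n, delSeq x.1 (posIdx a x) n ≠ 2 * a := by
          intro n
          simp only [delSeq]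
          split_ifs with h1
          · have := posIdx_lt a x n h1
            omega
          · have : x.1 (posIdx a x) < x.1 (n + 1) := x.2.1 (by omega)
            omega
        erw [psiStarB_eq_single a x (posIdx a x) ha
              ⟨_, delSeq_mem x.1 x.2 (posIdx a x)⟩ rfl,
            map_smul, psiStarOp_single, psiStarB_zero a _ hnot, smul_zero]
        simp
      · -- a < b, so pos of a is strictly below pos of b
        have h2ab : 2 * a < 2 * b := by omega
        have hpq : posIdx a x < posIdx b x := x.2.1.lt_iff_lt.mp (by rw [ha, hb]; omega)
        obtain ⟨s, hq⟩ : ∃ s, posIdx b x = s + 1 := ⟨posIdx b x - 1, by omega⟩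
        have hps : posIdx a x ≤ s := by omega
        have hb' : x.1 (s + 1) = 2 * b := by rw [← hq]; exact hb
        have hW := delSeq_mem _ (delSeq_mem x.1 x.2 (posIdx a x)) s
        have hYa : delSeq x.1 (s + 1) (posIdx a x) = 2 * a := by
          simp only [delSeq, if_pos (show posIdx a x < s + 1 by omega)]; exact ha
        have hZb : delSeq x.1 (posIdx a x) s = 2 * b := by
          simp only [delSeq, if_neg (show ¬ s < posIdx a x by omega)]; exact hb'
        erw [psiStarB_eq_single b x (s + 1) hb' ⟨_, delSeq_mem x.1 x.2 (s + 1)⟩ rfl,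
            psiStarB_eq_single a x (posIdx a x) ha
              ⟨_, delSeq_mem x.1 x.2 (posIdx a x)⟩ rfl,
            map_smul, map_smul, psiStarOp_single, psiStarOp_single,
            psiStarB_eq_single a ⟨_, delSeq_mem x.1 x.2 (s + 1)⟩ (posIdx a x) hYa
              ⟨_, hW⟩ (del_del x.1 (posIdx a x) s hps).symm,
            psiStarB_eq_single b ⟨_, delSeq_mem x.1 x.2 (posIdx a x)⟩ s hZb
              ⟨_, hW⟩ rfl,
            smul_smul, smul_smul, ← add_smul,
            show (-1:ℤ)^(s+1) * (-1)^(posIdx a x) + (-1)^(posIdx a x) * (-1)^s = 0 by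
              rw [pow_succ]; ring,
            zero_smul]
    · -- 2a not in x
      erw [psiStarB_zero a x (not_mem_of_posIdx a x ha), map_zero, add_zero,
          psiStarB_eq_single b x (posIdx b x) hb
            ⟨_, delSeq_mem x.1 x.2 (posIdx b x)⟩ rfl, map_smul, psiStarOp_single,
          psiStarB_zero a _ (delSeq_not_mem x _ _ (not_mem_of_posIdx a x ha)),
          smul_zero]
  · rw [psiStarB_zero b x (not_mem_of_posIdx b x hb), map_zero, zero_add]
    by_cases ha : x.1 (posIdx a x) = 2 * a
    · erw [psiStarB_eq_single a x (posIdx a x) ha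
            ⟨_, delSeq_mem x.1 x.2 (posIdx a x)⟩ rfl, map_smul, psiStarOp_single,
          psiStarB_zero b _ (delSeq_not_mem x _ _ (not_mem_of_posIdx b x hb)),
          smul_zero]
    · rw [psiStarB_zero a x (not_mem_of_posIdx a x ha), map_zero]
lemma insSeq_not_mem (x : IM) (p : ℕ) (c d : ℤ) (hcd : c ≠ d) (h : ∀ n, x.1 n ≠ d) :
    ∀ n, insSeq x.1 p c n ≠ d := by
  intro n
  simp only [insSeq]
  split_ifs
  · exact h n
  · exact hcd
  · exact h (n - 1)

lemma psi_star_single (a b : ℤ) (x : IM) :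
    psiOp a (psiStarB b x) + psiStarOp b (psiB a x) =
      if a = b then Finsupp.single x 1 else 0 := by
  by_cases hb : x.1 (posIdx b x) = 2 * b
  · erw [psiStarB_eq_single b x (posIdx b x) hb
          ⟨_, delSeq_mem x.1 x.2 (posIdx b x)⟩ rfl, map_smul, psiOp_single]
    by_cases ha : x.1 (posIdx a x) = 2 * a
    · rw [psiB_zero a x _ ha, map_zero, add_zero]
      by_cases hab : a = b
      · subst hab
        rw [if_pos rfl]
        have hnot : ∀ i, i < posIdx a x → delSeq x.1 (posIdx a x) i < 2 * a := by
          intro i hi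
          simp only [delSeq, if_pos hi]
          exact posIdx_lt a x i hi
        have hhigh : 2 * a < delSeq x.1 (posIdx a x) (posIdx a x) := by
          simp only [delSeq, if_neg (lt_irrefl _)]
          have h1 : x.1 (posIdx a x) < x.1 (posIdx a x + 1) := x.2.1 (by omega)
          omega
        rw [psiB_eq_single a ⟨_, delSeq_mem x.1 x.2 (posIdx a x)⟩ (posIdx a x)
              (le_of_lt hhigh) hnot (ne_of_lt hhigh).symm x
              (by rw [← ha]; exact (ins_del x.1 (posIdx a x)).symm),
            smul_smul, ← pow_add, Even.neg_one_pow ⟨posIdx a x, rfl⟩, one_smul]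
      · rw [if_neg hab]
        have hpq : posIdx a x ≠ posIdx b x := by
          intro h
          rw [h, hb] at ha
          exact hab (by omega)
        by_cases hplt : posIdx a x < posIdx b x
        · have hm : delSeq x.1 (posIdx b x) (posIdx a x) = 2 * a := by
            simp only [delSeq, if_pos hplt]; exact ha
          rw [psiB_zero a ⟨_, delSeq_mem x.1 x.2 (posIdx b x)⟩ _ hm, smul_zero]
        · have hm : delSeq x.1 (posIdx b x) (posIdx a x - 1) = 2 * a := by
            simp only [delSeq, if_neg (show ¬ posIdx a x - 1 < posIdx b x by omega)]
            rw [show posIdx a x - 1 + 1 = posIdx a x by omega]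
            exact ha
          rw [psiB_zero a ⟨_, delSeq_mem x.1 x.2 (posIdx b x)⟩ _ hm, smul_zero]
    · -- 2a absent, 2b present: anticommuting case
      have hab : a ≠ b := fun h => by subst h; exact ha hb
      rw [if_neg hab]
      have hZ : IMprop (insSeq x.1 (posIdx a x) (2 * a)) :=
        insSeq_mem x.1 x.2 (posIdx a x) (2 * a) (even_two_mul a) (posIdx_lt a x)
          (lt_of_le_of_ne (posIdx_le a x) (Ne.symm ha))
      erw [psiB_eq_single a x (posIdx a x) (posIdx_le a x) (posIdx_lt a x) ha
            ⟨_, hZ⟩ rfl, map_smul, psiStarOp_single]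
      by_cases hpq : posIdx a x ≤ posIdx b x
      · have hYlow : ∀ i, i < posIdx a x → delSeq x.1 (posIdx b x) i < 2 * a := by
          intro i hi
          simp only [delSeq, if_pos (show i < posIdx b x by omega)]
          exact posIdx_lt a x i hi
        have hYhigh : 2 * a < delSeq x.1 (posIdx b x) (posIdx a x) := by
          simp only [delSeq]
          split_ifs with h1
          · exact lt_of_le_of_ne (posIdx_le a x) (Ne.symm ha)
          · have h2 := posIdx_le a x
            have h3 : x.1 (posIdx a x) < x.1 (posIdx a x + 1) :=
              x.2.1 (Nat.lt_succ_self _)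
            have h4 : x.1 (posIdx a x + 1) ≤ x.1 (posIdx b x + 1) := by
              rcases eq_or_lt_of_le (show posIdx a x + 1 ≤ posIdx b x + 1 by omega)
                with h | h
              · rw [h]
              · exact le_of_lt (x.2.1 h)
            omega
        have hW : IMprop (insSeq (delSeq x.1 (posIdx b x)) (posIdx a x) (2 * a)) :=
          insSeq_mem _ (delSeq_mem x.1 x.2 _) _ _ (even_two_mul a) hYlow hYhigh
        have hZmem : insSeq x.1 (posIdx a x) (2 * a) (posIdx b x + 1) = 2 * b := by
          simp only [insSeq, if_neg (show ¬ posIdx b x + 1 < posIdx a x by omega),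
            if_neg (show ¬ posIdx b x + 1 = posIdx a x by omega), Nat.add_sub_cancel]
          exact hb
        rw [psiB_eq_single a ⟨_, delSeq_mem x.1 x.2 (posIdx b x)⟩ (posIdx a x)
              (le_of_lt hYhigh) hYlow (ne_of_lt hYhigh).symm ⟨_, hW⟩ rfl,
            psiStarB_eq_single b ⟨_, hZ⟩ (posIdx b x + 1) hZmem ⟨_, hW⟩
              (del_ins_ge x.1 (posIdx a x) (posIdx b x) (2 * a) hpq).symm,
            smul_smul, smul_smul, ← add_smul,
            show (-1:ℤ)^(posIdx b x) * (-1)^(posIdx a x) +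
                (-1)^(posIdx a x) * (-1)^(posIdx b x + 1) = 0 by rw [pow_succ]; ring,
            zero_smul]
      · obtain ⟨s, hs⟩ : ∃ s, posIdx a x = s + 1 := ⟨posIdx a x - 1, by omega⟩
        have hYlow : ∀ i, i < s → delSeq x.1 (posIdx b x) i < 2 * a := by
          intro i hi
          simp only [delSeq]
          split_ifs with h1
          · exact posIdx_lt a x i (by omega)
          · exact posIdx_lt a x (i + 1) (by omega)
        have hYhigh : 2 * a < delSeq x.1 (posIdx b x) s := by
          simp only [delSeq, if_neg (show ¬ s < posIdx b x by omega)]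
          rw [← hs]
          exact lt_of_le_of_ne (posIdx_le a x) (Ne.symm ha)
        have hW : IMprop (insSeq (delSeq x.1 (posIdx b x)) s (2 * a)) :=
          insSeq_mem _ (delSeq_mem x.1 x.2 _) s _ (even_two_mul a) hYlow hYhigh
        have hZmem : insSeq x.1 (posIdx a x) (2 * a) (posIdx b x) = 2 * b := by
          simp only [insSeq, if_pos (show posIdx b x < posIdx a x by omega)]
          exact hb
        have hkey : delSeq (insSeq x.1 (posIdx a x) (2 * a)) (posIdx b x) =
            insSeq (delSeq x.1 (posIdx b x)) s (2 * a) := by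
          rw [del_ins_lt x.1 (posIdx a x) (posIdx b x) (2 * a) (by omega), hs,
            Nat.add_sub_cancel]
        rw [psiB_eq_single a ⟨_, delSeq_mem x.1 x.2 (posIdx b x)⟩ s
              (le_of_lt hYhigh) hYlow (ne_of_lt hYhigh).symm ⟨_, hW⟩ rfl,
            psiStarB_eq_single b ⟨_, hZ⟩ (posIdx b x) hZmem ⟨_, hW⟩ hkey.symm,
            smul_smul, smul_smul, ← add_smul, hs,
            show (-1:ℤ)^(posIdx b x) * (-1)^s + (-1)^(s+1) * (-1)^(posIdx b x) = 0 by
              rw [pow_succ]; ring,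
            zero_smul]
  · rw [psiStarB_zero b x (not_mem_of_posIdx b x hb), map_zero, zero_add]
    by_cases ha : x.1 (posIdx a x) = 2 * a
    · have hab : a ≠ b := fun h => by subst h; exact hb ha
      rw [psiB_zero a x _ ha, map_zero, if_neg hab]
    · have hZ : IMprop (insSeq x.1 (posIdx a x) (2 * a)) :=
        insSeq_mem x.1 x.2 (posIdx a x) (2 * a) (even_two_mul a) (posIdx_lt a x)
          (lt_of_le_of_ne (posIdx_le a x) (Ne.symm ha))
      erw [psiB_eq_single a x (posIdx a x) (posIdx_le a x) (posIdx_lt a x) ha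
            ⟨_, hZ⟩ rfl, map_smul, psiStarOp_single]
      by_cases hab : a = b
      · subst hab
        rw [if_pos rfl]
        have hZmem : insSeq x.1 (posIdx a x) (2 * a) (posIdx a x) = 2 * a := by
          simp [insSeq]
        rw [psiStarB_eq_single a ⟨_, hZ⟩ (posIdx a x) hZmem x
              (del_ins x.1 (posIdx a x) (2 * a)).symm,
            smul_smul, ← pow_add, Even.neg_one_pow ⟨posIdx a x, rfl⟩, one_smul]
      · rw [if_neg hab,
            psiStarB_zero b ⟨_, hZ⟩ (insSeq_not_mem x (posIdx a x) (2 * a) (2 * b)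
              (by omega) (not_mem_of_posIdx b x hb)), smul_zero]
lemma opExt {f g : VF →ₗ[ℤ] VF}
    (h : ∀ x : IM, f (Finsupp.single x 1) = g (Finsupp.single x 1)) : f = g := by
  refine Finsupp.lhom_ext fun a c => ?_
  have hc : (Finsupp.single a c : VF) = c • Finsupp.single a 1 := by
    rw [Finsupp.smul_single, smul_eq_mul, mul_one]
  rw [hc, map_smul, map_smul, h]

lemma psiOp_anticomm (a b : ℤ) : psiOp a ∘ₗ psiOp b + psiOp b ∘ₗ psiOp a = 0 := by
  refine opExt fun x => ?_
  simp only [LinearMap.add_apply, LinearMap.comp_apply, LinearMap.zero_apply,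
    psiOp_single]
  rcases le_total a b with h | h
  · exact psi_psi_aux a b h x
  · rw [add_comm]; exact psi_psi_aux b a h x

lemma psiStarOp_anticomm (a b : ℤ) :
    psiStarOp a ∘ₗ psiStarOp b + psiStarOp b ∘ₗ psiStarOp a = 0 := by
  refine opExt fun x => ?_
  simp only [LinearMap.add_apply, LinearMap.comp_apply, LinearMap.zero_apply,
    psiStarOp_single]
  rcases le_total a b with h | h
  · exact star_star_aux a b h x
  · rw [add_comm]; exact star_star_aux b a h x

lemma psiOp_psiStarOp (a b : ℤ) :
    psiOp a ∘ₗ psiStarOp b + psiStarOp b ∘ₗ psiOp a =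
      if a = b then LinearMap.id else 0 := by
  refine opExt fun x => ?_
  simp only [LinearMap.add_apply, LinearMap.comp_apply, psiOp_single, psiStarOp_single]
  rw [psi_star_single a b x]
  split_ifs <;> simp

lemma psiOp_sq (a : ℤ) : psiOp a ∘ₗ psiOp a = 0 := by
  have h := psiOp_anticomm a a
  refine opExt fun x => ?_
  have h2 := LinearMap.congr_fun h (Finsupp.single x 1)
  simp only [LinearMap.add_apply, LinearMap.comp_apply, LinearMap.zero_apply] at h2 ⊢
  ext y
  have h3 := DFunLike.congr_fun h2 y
  simp only [Finsupp.add_apply, Finsupp.coe_zero, Pi.zero_apply] at h3 ⊢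
  omega

lemma psiStarOp_sq (a : ℤ) : psiStarOp a ∘ₗ psiStarOp a = 0 := by
  have h := psiStarOp_anticomm a a
  refine opExt fun x => ?_
  have h2 := LinearMap.congr_fun h (Finsupp.single x 1)
  simp only [LinearMap.add_apply, LinearMap.comp_apply, LinearMap.zero_apply] at h2 ⊢
  ext y
  have h3 := DFunLike.congr_fun h2 y
  simp only [Finsupp.add_apply, Finsupp.coe_zero, Pi.zero_apply] at h3 ⊢
  omega

lemma tOp_even (m : ℤ) : tOp (2 * m) = psiOp m := by
  rw [tOp, if_pos (show (2 * m) % 2 = 0 by omega)]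
  congr 1
  omega

lemma tOp_odd (m : ℤ) : tOp (2 * m + 1) = psiStarOp (m + 1) + psiStarOp m := by
  rw [tOp, if_neg (show ¬ (2 * m + 1) % 2 = 0 by omega),
    show (2 * m + 1 + 1) / 2 = m + 1 by omega,
    show m + 1 - (1 : ℤ) = m by ring]

lemma pair_rel {A C D R S : VF →ₗ[ℤ] VF} (h1 : A ∘ₗ C + C ∘ₗ A = R)
    (h2 : A ∘ₗ D + D ∘ₗ A = S) :
    A ∘ₗ (C + D) + (C + D) ∘ₗ A = R + S := by
  rw [LinearMap.comp_add, LinearMap.add_comp, ← h1, ← h2]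
  abel

lemma quad_rel {A B C D : VF →ₗ[ℤ] VF} (h1 : A ∘ₗ C + C ∘ₗ A = 0)
    (h2 : A ∘ₗ D + D ∘ₗ A = 0) (h3 : B ∘ₗ C + C ∘ₗ B = 0)
    (h4 : B ∘ₗ D + D ∘ₗ B = 0) :
    (A + B) ∘ₗ (C + D) + (C + D) ∘ₗ (A + B) = 0 := by
  rw [LinearMap.add_comp, LinearMap.comp_add, LinearMap.comp_add,
    LinearMap.add_comp, LinearMap.comp_add, LinearMap.comp_add]
  have e := congrArg₂ (· + ·) (congrArg₂ (· + ·) h1 h2) (congrArg₂ (· + ·) h3 h4)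
  simp only [add_zero] at e
  rw [← e]
  abel
/-- The operators `t_i` on the fermionic Fock space `V_F` satisfy the Clifford
relations: `t_i² = 0`, `t_i t_j + t_j t_i = 0` for `|i−j| > 1`, and
`t_i t_{i+1} + t_{i+1} t_i = id`. -/
theorem tOp_clifford_relations (i j : ℤ) :
    (tOp i) ∘ₗ (tOp i) = 0 ∧
    (1 < |i - j| → (tOp i) ∘ₗ (tOp j) + (tOp j) ∘ₗ (tOp i) = 0) ∧
    (tOp i) ∘ₗ (tOp (i + 1)) + (tOp (i + 1)) ∘ₗ (tOp i) = LinearMap.id := by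
  refine ⟨?_, ?_, ?_⟩
  · rcases Int.even_or_odd i with ⟨m, hm⟩ | ⟨m, hm⟩
    · rw [show i = 2 * m by omega, tOp_even, psiOp_sq]
    · rw [show i = 2 * m + 1 by omega, tOp_odd, LinearMap.add_comp,
        LinearMap.comp_add, LinearMap.comp_add, psiStarOp_sq, psiStarOp_sq,
        zero_add, add_zero]
      exact psiStarOp_anticomm (m + 1) m
  · intro hij
    have hd : i + 1 < j ∨ j + 1 < i := by
      rcases abs_cases (i - j) with ⟨h1, h2⟩ | ⟨h1, h2⟩ <;> rw [h1] at hij <;> omega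
    rcases Int.even_or_odd i with ⟨m, hm⟩ | ⟨m, hm⟩ <;>
      rcases Int.even_or_odd j with ⟨n, hn⟩ | ⟨n, hn⟩
    · rw [show i = 2 * m by omega, show j = 2 * n by omega, tOp_even, tOp_even]
      exact psiOp_anticomm m n
    · rw [show i = 2 * m by omega, show j = 2 * n + 1 by omega, tOp_even, tOp_odd]
      have h1 := psiOp_psiStarOp m (n + 1)
      rw [if_neg (show m ≠ n + 1 by omega)] at h1
      have h2 := psiOp_psiStarOp m n
      rw [if_neg (show m ≠ n by omega)] at h2
      have h := pair_rel h1 h2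
      rwa [add_zero] at h
    · rw [show i = 2 * m + 1 by omega, show j = 2 * n by omega, tOp_odd, tOp_even]
      have h1 := psiOp_psiStarOp n (m + 1)
      rw [if_neg (show n ≠ m + 1 by omega)] at h1
      have h2 := psiOp_psiStarOp n m
      rw [if_neg (show n ≠ m by omega)] at h2
      have h := pair_rel h1 h2
      rw [add_zero] at h
      rw [add_comm]
      exact h
    · rw [show i = 2 * m + 1 by omega, show j = 2 * n + 1 by omega, tOp_odd, tOp_odd]
      exact quad_rel (psiStarOp_anticomm (m + 1) (n + 1)) (psiStarOp_anticomm (m + 1) n)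
        (psiStarOp_anticomm m (n + 1)) (psiStarOp_anticomm m n)
  · rcases Int.even_or_odd i with ⟨m, hm⟩ | ⟨m, hm⟩
    · rw [show i = 2 * m by omega, tOp_even, tOp_odd]
      have h1 := psiOp_psiStarOp m (m + 1)
      rw [if_neg (show m ≠ m + 1 by omega)] at h1
      have h2 := psiOp_psiStarOp m m
      rw [if_pos rfl] at h2
      have h := pair_rel h1 h2
      rwa [zero_add] at h
    · rw [show i = 2 * m + 1 by omega, show 2 * m + 1 + 1 = 2 * (m + 1) by ring,
        tOp_odd, tOp_even]
      have h1 := psiOp_psiStarOp (m + 1) (m + 1)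
      rw [if_pos rfl] at h1
      have h2 := psiOp_psiStarOp (m + 1) m
      rw [if_neg (show m + 1 ≠ m by omega)] at h2
      have h := pair_rel h1 h2
      rw [add_zero] at h
      rw [add_comm]
      exact h
end

section
/- For integers s and t with t ≥ 1, define f(s,t) = Σ_{j=0}^{t−1} (−1)^{s+t−1−j} · invfac(s+t−1−j) · (1/j!) ∈ ℚ. Then: if s > 0, f(s,t) = (−1)^s / ((s−1)! · (t−1)! · (s+t−1)); and if s ≤ 0, then f(s,t) = 1 when s + t = 1 and f(s,t) = 0 otherwise. -/
/-- `invfac m = 1/m!` for `m ≥ 0`, and `0` for `m < 0`. -/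
noncomputable def invfac (m : ℤ) : ℚ := if 0 ≤ m then ((m.toNat).factorial : ℚ)⁻¹ else 0

/-- `msign i = (−1)^i` for an integer `i`. -/
def msign (i : ℤ) : ℚ := if Even i then 1 else -1

/-- `f(s,t) = Σ_{j=0}^{t−1} (−1)^{s+t−1−j} · invfac(s+t−1−j) · (1/j!)`. -/
noncomputable def fST (s : ℤ) (t : ℕ) : ℚ :=
  ∑ j ∈ Finset.range t,
    msign (s + t - 1 - j) * invfac (s + t - 1 - j) * ((Nat.factorial j : ℚ))⁻¹

lemma msign_natCast (n : ℕ) : msign (n : ℤ) = (-1:ℚ)^n := by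
  rcases Nat.even_or_odd n with h | h
  · simp [msign, Int.even_coe_nat, h, h.neg_one_pow]
  · simp [msign, Int.even_coe_nat, Nat.not_even_iff_odd.mpr h, h.neg_one_pow]

lemma invfac_natCast (n : ℕ) : invfac (n : ℤ) = (n.factorial : ℚ)⁻¹ := by
  simp [invfac]

lemma invfac_neg {i : ℤ} (h : i < 0) : invfac i = 0 := by
  simp [invfac, not_le.mpr h]

lemma alt_partial (m k : ℕ) :
    ∑ j ∈ Finset.range (k+1), (-1:ℚ)^j * ((m+1).choose j : ℚ)
      = (-1:ℚ)^k * (m.choose k : ℚ) := by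
  induction k with
  | zero => simp
  | succ k ih =>
      rw [Finset.sum_range_succ, ih, Nat.choose_succ_succ (n := m) (k := k)]
      push_cast; ring

lemma key_term (N j : ℕ) (hj' : j ≤ N) :
    (-1:ℚ)^(N-j) * ((N-j).factorial : ℚ)⁻¹ * (j.factorial : ℚ)⁻¹
    = (-1:ℚ)^N * (N.factorial : ℚ)⁻¹ * ((-1:ℚ)^j * (N.choose j : ℚ)) := by
  have hpow : (-1:ℚ)^(N-j) * (-1:ℚ)^j = (-1:ℚ)^N := by
    rw [← pow_add, Nat.sub_add_cancel hj']
  have hsq : (-1:ℚ)^j * (-1:ℚ)^j = 1 := by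
    rw [← pow_add]; exact Even.neg_one_pow ⟨_, rfl⟩
  have hch : ((N.choose j : ℚ)) * (j.factorial : ℚ) * ((N-j).factorial : ℚ)
      = (N.factorial : ℚ) := by
    exact_mod_cast congrArg (Nat.cast (R := ℚ))
      (Nat.choose_mul_factorial_mul_factorial hj')
  have f1 : ((N-j).factorial : ℚ) ≠ 0 := Nat.cast_ne_zero.mpr (Nat.factorial_ne_zero _)
  have f2 : (j.factorial : ℚ) ≠ 0 := Nat.cast_ne_zero.mpr (Nat.factorial_ne_zero _)
  have f3 : (N.factorial : ℚ) ≠ 0 := Nat.cast_ne_zero.mpr (Nat.factorial_ne_zero _)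
  field_simp
  linear_combination (-(-1:ℚ)^(N-j)) * hch
    + ((-1:ℚ)^j * (N.choose j : ℚ) * ((N-j).factorial : ℚ) * (j.factorial : ℚ)) * hpow
    - ((-1:ℚ)^(N-j) * (N.choose j : ℚ) * ((N-j).factorial : ℚ) * (j.factorial : ℚ)) * hsq

lemma lemB (m u : ℕ) :
    ∑ j ∈ Finset.range (u+1),
      (-1:ℚ)^(m+u+1-j) * ((m+u+1-j).factorial : ℚ)⁻¹ * (j.factorial : ℚ)⁻¹
    = (-1:ℚ)^(m+1) * (m.factorial : ℚ)⁻¹ * (u.factorial : ℚ)⁻¹ * ((m+u+1 : ℕ) : ℚ)⁻¹ := by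
  have key : ∀ j ∈ Finset.range (u+1),
      (-1:ℚ)^(m+u+1-j) * ((m+u+1-j).factorial : ℚ)⁻¹ * (j.factorial : ℚ)⁻¹
      = (-1:ℚ)^(m+u+1) * ((m+u+1).factorial : ℚ)⁻¹ * ((-1:ℚ)^j * ((m+u+1).choose j : ℚ)) := by
    intro j hj
    exact key_term (m+u+1) j (by have := Finset.mem_range.mp hj; omega)
  rw [Finset.sum_congr rfl key, ← Finset.mul_sum, alt_partial (m+u) u]
  have hch : ((m+u).choose u : ℚ) * (u.factorial : ℚ) * (m.factorial : ℚ) = ((m+u).factorial : ℚ) := by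
    have := Nat.choose_mul_factorial_mul_factorial (Nat.le_add_left u m)
    simp only [Nat.add_sub_cancel] at this
    exact_mod_cast congrArg (Nat.cast (R := ℚ)) this
  have hfac : ((m+u+1).factorial : ℚ) = ((m+u+1:ℕ):ℚ) * ((m+u).factorial : ℚ) := by
    exact_mod_cast congrArg (Nat.cast (R := ℚ)) (Nat.factorial_succ (m+u))
  have hab : (-1:ℚ)^(m+u+1) = (-1:ℚ)^(m+1) * (-1:ℚ)^u := by
    rw [show m+u+1 = (m+1)+u by ring, pow_add]
  have hsq : (-1:ℚ)^u * (-1:ℚ)^u = 1 := by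
    rw [← pow_add]; exact Even.neg_one_pow ⟨_, rfl⟩
  have f1 : ((m+u).factorial : ℚ) ≠ 0 := Nat.cast_ne_zero.mpr (Nat.factorial_ne_zero _)
  have f2 : (u.factorial : ℚ) ≠ 0 := Nat.cast_ne_zero.mpr (Nat.factorial_ne_zero _)
  have f3 : (m.factorial : ℚ) ≠ 0 := Nat.cast_ne_zero.mpr (Nat.factorial_ne_zero _)
  have f4 : ((m+u+1:ℕ):ℚ) ≠ 0 := by positivity
  rw [hfac]
  set X : ℚ := ((m+u+1:ℕ):ℚ) with hX
  field_simp
  linear_combination (-(-1:ℚ)^m * ((m+u).choose u : ℚ) * (m.factorial : ℚ) * (u.factorial : ℚ)) * hsq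
    - ((-1:ℚ)^m) * hch

lemma lemC (n : ℕ) :
    ∑ j ∈ Finset.range (n+1),
      (-1:ℚ)^(n-j) * ((n-j).factorial : ℚ)⁻¹ * (j.factorial : ℚ)⁻¹
    = if n = 0 then 1 else 0 := by
  rcases n with _ | v
  · simp
  · rw [if_neg (by omega)]
    have key : ∀ j ∈ Finset.range (v+1+1),
        (-1:ℚ)^(v+1-j) * ((v+1-j).factorial : ℚ)⁻¹ * (j.factorial : ℚ)⁻¹
        = (-1:ℚ)^(v+1) * ((v+1).factorial : ℚ)⁻¹ * ((-1:ℚ)^j * ((v+1).choose j : ℚ)) := by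
      intro j hj
      exact key_term (v+1) j (by have := Finset.mem_range.mp hj; omega)
    rw [Finset.sum_congr rfl key, ← Finset.mul_sum, alt_partial v (v+1)]
    simp [Nat.choose_succ_self]

/-- Evaluation of `f(s,t)` (equation (5.27) of the paper): for `s > 0`,
`f(s,t) = (−1)^s / ((s−1)!·(t−1)!·(s+t−1))`; for `s ≤ 0`, `f(s,t) = δ_{s+t,1}`. -/
theorem fST_eval (s : ℤ) (t : ℕ) (ht : 1 ≤ t) :
    (0 < s → fST s t =
      msign s * ((((s - 1).toNat).factorial : ℚ))⁻¹ * (((t - 1).factorial : ℚ))⁻¹ *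
        ((s : ℚ) + (t : ℚ) - 1)⁻¹) ∧
    (s ≤ 0 → fST s t = if s + (t : ℤ) = 1 then 1 else 0) := by
  constructor
  · intro hs
    obtain ⟨m, rfl⟩ : ∃ m : ℕ, s = (m:ℤ)+1 := ⟨(s-1).toNat, by omega⟩
    obtain ⟨u, rfl⟩ : ∃ u : ℕ, t = u+1 := ⟨t-1, by omega⟩
    have hsum : fST ((m:ℤ)+1) (u+1)
        = ∑ j ∈ Finset.range (u+1),
          (-1:ℚ)^(m+u+1-j) * ((m+u+1-j).factorial : ℚ)⁻¹ * (j.factorial : ℚ)⁻¹ := by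
      unfold fST
      refine Finset.sum_congr rfl ?_
      intro j hj
      have hj' : j < u+1 := Finset.mem_range.mp hj
      have hidx : (m:ℤ)+1 + (u+1:ℕ) - 1 - j = ((m+u+1-j : ℕ) : ℤ) := by omega
      rw [hidx, msign_natCast, invfac_natCast]
    rw [hsum, lemB]
    have h1 : (((m:ℤ)+1-1).toNat) = m := by omega
    have h2 : (u+1-1) = u := by omega
    have h3 : msign ((m:ℤ)+1) = (-1:ℚ)^(m+1) := by
      rw [show (m:ℤ)+1 = ((m+1:ℕ):ℤ) by push_cast; ring, msign_natCast]
    have h4 : (((m:ℤ)+1 : ℤ) : ℚ) + ((u+1:ℕ) : ℚ) - 1 = ((m+u+1:ℕ):ℚ) := by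
      push_cast; ring
    rw [h1, h2, h3, h4]
  · intro hs
    by_cases hneg : s + (t:ℤ) - 1 < 0
    · have hz : fST s t = 0 := by
        unfold fST
        refine Finset.sum_eq_zero ?_
        intro j hj
        rw [invfac_neg (by omega : s + (t:ℤ) - 1 - j < 0)]
        ring
      rw [hz, if_neg (by omega)]
    · push_neg at hneg
      set n : ℕ := (s + (t:ℤ) - 1).toNat with hn
      have hn' : (n:ℤ) = s + (t:ℤ) - 1 := Int.toNat_of_nonneg hneg
      have hnt : n+1 ≤ t := by omega
      have hsub : Finset.range (n+1) ⊆ Finset.range t := Finset.range_subset_range.mpr hnt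
      have hzero : ∀ j ∈ Finset.range t, j ∉ Finset.range (n+1) →
          msign (s + t - 1 - j) * invfac (s + t - 1 - j) * ((Nat.factorial j : ℚ))⁻¹ = 0 := by
        intro j hj hj'
        have : n+1 ≤ j := by
          by_contra h
          exact hj' (Finset.mem_range.mpr (by omega))
        rw [invfac_neg (by omega : s + (t:ℤ) - 1 - j < 0)]
        ring
      have hsum : fST s t = ∑ j ∈ Finset.range (n+1),
          msign (s + t - 1 - j) * invfac (s + t - 1 - j) * ((Nat.factorial j : ℚ))⁻¹ :=
        (Finset.sum_subset hsub hzero).symm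
      have hsum2 : fST s t = ∑ j ∈ Finset.range (n+1),
          (-1:ℚ)^(n-j) * ((n-j).factorial : ℚ)⁻¹ * (j.factorial : ℚ)⁻¹ := by
        rw [hsum]
        refine Finset.sum_congr rfl ?_
        intro j hj
        have hj' : j < n+1 := Finset.mem_range.mp hj
        have hidx : s + (t:ℤ) - 1 - j = ((n-j : ℕ) : ℤ) := by omega
        rw [hidx, msign_natCast, invfac_natCast]
      rw [hsum2, lemC]
      by_cases h0 : n = 0
      · rw [if_pos h0, if_pos (by omega)]
      · rw [if_neg h0, if_neg (by omega)]
end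

section
/- Let k ≥ 1 and let λ̄_1 ≥ λ̄_2 ≥ … ≥ λ̄_k ≥ 0 be integers. Then the k×k matrix C over ℚ with entries C_{ij} = invfac(i − j + λ̄_j) for 1 ≤ i, j ≤ k is nonsingular, i.e. det C ≠ 0. -/
open Matrix

lemma invfac_key (m : ℤ) : ∀ (r : ℕ), 0 ≤ m + r →
    (((m + r).toNat.factorial : ℚ)) * invfac m = ∏ s ∈ Finset.range r, ((m : ℚ) + s + 1) := by
  intro r
  induction r with
  | zero =>
    intro h
    simp only [Nat.cast_zero, add_zero] at h ⊢
    rw [invfac, if_pos h, Finset.range_zero, Finset.prod_empty]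
    exact mul_inv_cancel₀ (by exact_mod_cast (Nat.factorial_pos _).ne')
  | succ r ih =>
    intro h
    rcases le_or_gt 0 (m + r) with h0 | h0
    · have hfac : (m + (r+1:ℕ)).toNat.factorial = (m + r).toNat.factorial * ((m+r).toNat + 1) := by
        have : (m + (r+1:ℕ)).toNat = (m + r).toNat + 1 := by omega
        rw [this, Nat.factorial_succ, mul_comm]
      rw [Finset.prod_range_succ, ← ih h0, hfac]
      have ht : (((m + r).toNat : ℕ) : ℚ) = (m : ℚ) + r := by
        exact_mod_cast congrArg (fun z : ℤ => (z : ℚ)) (Int.toNat_of_nonneg h0)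
      push_cast
      rw [ht]
      ring
    · have hm : invfac m = 0 := by
        rw [invfac, if_neg]; omega
      rw [hm, mul_zero]
      symm
      apply Finset.prod_eq_zero (i := r) (Finset.self_mem_range_succ r)
      have : ((m + r + 1 : ℤ) : ℚ) = 0 := by
        have : m + r + 1 = 0 := by omega
        rw [this]; norm_num
      push_cast at this
      linarith

lemma lam_anti (k : ℕ) (lam : ℕ → ℕ) (hdec : ∀ j, 1 ≤ j → j < k → lam (j + 1) ≤ lam j) :
    ∀ b a, 1 ≤ a → a ≤ b → b ≤ k → lam b ≤ lam a := by
  intro b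
  induction b with
  | zero => intro a ha hab _; omega
  | succ b ih =>
    intro a ha hab hbk
    rcases Nat.eq_or_lt_of_le hab with h | h
    · rw [h]
    · exact le_trans (hdec b (by omega) (by omega)) (ih a ha (by omega) (by omega))

lemma main_aux (k : ℕ) (hk : 1 ≤ k) (d : Fin k → ℤ)
    (hlb : ∀ j : Fin k, -(j.1 : ℤ) ≤ d j)
    (hanti : ∀ j1 j2 : Fin k, j1 < j2 → d j2 < d j1) :
    (Matrix.of fun i j : Fin k => invfac ((i : ℤ) + d j)).det ≠ 0 := by
  classical
  set P : Fin k → Polynomial ℚ := fun i =>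
    ∏ s ∈ Finset.range (k - 1 - i.1), (Polynomial.X + Polynomial.C ((i.1 : ℚ) + s + 1)) with hP
  set v : Fin k → ℚ := fun j => (d j : ℚ) with hv
  set N : Fin k → ℚ := fun j => (((d j + ((k-1 : ℕ) : ℤ)).toNat.factorial : ℕ) : ℚ) with hN
  have hentry : ∀ i j : Fin k, N j * invfac ((i : ℤ) + d j) = (P i).eval (v j) := by
    intro i j
    have hik : i.1 ≤ k - 1 := by have := i.isLt; omega
    have hm : ((i : ℤ) + d j) + ((k - 1 - i.1 : ℕ) : ℤ) = d j + ((k-1 : ℕ) : ℤ) := by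
      have := i.isLt; omega
    have hpos : (0 : ℤ) ≤ ((i : ℤ) + d j) + ((k - 1 - i.1 : ℕ) : ℤ) := by
      rw [hm]; have := hlb j; have := j.isLt; omega
    have key := invfac_key ((i : ℤ) + d j) (k - 1 - i.1) hpos
    rw [hm] at key
    simp only [hN]
    rw [key]
    simp only [hP, Polynomial.eval_prod, Polynomial.eval_add, Polynomial.eval_X,
      Polynomial.eval_C]
    apply Finset.prod_congr rfl
    intro s _
    simp only [hv]
    push_cast
    ring
  have hdegP : ∀ i : Fin k, (P i).natDegree = k - 1 - i.1 := by
    intro i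
    simp only [hP]
    rw [Polynomial.natDegree_prod _ _ (fun s _ => (Polynomial.monic_X_add_C _).ne_zero)]
    simp only [Polynomial.natDegree_X_add_C, Finset.sum_const, smul_eq_mul, mul_one,
      Finset.card_range]
  have hdeg : ∀ j : Fin k, (P (Fin.rev j)).natDegree = j.1 := by
    intro j
    rw [hdegP]
    have := j.isLt
    simp only [Fin.val_rev]
    omega
  have hmonic : ∀ j : Fin k, (P (Fin.rev j)).Monic := by
    intro j
    simp only [hP]
    exact Polynomial.monic_prod_of_monic _ _ fun s _ => Polynomial.monic_X_add_C _
  have hinj : Function.Injective v := by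
    intro a b hab
    have hd : d a = d b := by
      have : (d a : ℚ) = d b := by simpa [hv] using hab
      exact_mod_cast this
    by_contra hne
    rcases lt_or_gt_of_ne hne with h | h
    · have := hanti a b h; omega
    · have := hanti b a h; omega
  have hvand : (Matrix.vandermonde v).det ≠ 0 := Matrix.det_vandermonde_ne_zero_iff.mpr hinj
  have hA : (Matrix.of fun i j : Fin k => (P (Fin.rev j)).eval (v i)).det ≠ 0 := by
    rwa [Matrix.det_eval_matrixOfPolynomials_eq_det_vandermonde v (fun j => P (Fin.rev j))
      hdeg hmonic] at hvand
  set M : Matrix (Fin k) (Fin k) ℚ := Matrix.of fun i j : Fin k => invfac ((i : ℤ) + d j) with hM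
  have hrel : (M * Matrix.diagonal N).submatrix (Fin.revPerm : Equiv.Perm (Fin k)) id =
      (Matrix.of fun i j : Fin k => (P (Fin.rev j)).eval (v i))ᵀ := by
    ext i j
    simp only [Matrix.submatrix_apply, Matrix.transpose_apply, Matrix.mul_diagonal,
      Matrix.of_apply, id_eq, Fin.revPerm_apply, hM]
    rw [mul_comm]
    exact hentry (Fin.rev i) j
  have h1 : ((M * Matrix.diagonal N).submatrix (Fin.revPerm : Equiv.Perm (Fin k)) id).det ≠ 0 := by
    rw [hrel, Matrix.det_transpose]
    exact hA
  rw [Matrix.det_permute, Matrix.det_mul, Matrix.det_diagonal] at h1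
  intro hdet
  exact h1 (by rw [hdet, zero_mul, mul_zero])

/-- Lemma 5.9: for `k ≥ 1` and integers `λ̄_1 ≥ … ≥ λ̄_k ≥ 0`, the `k×k`
matrix over `ℚ` with entries `C_{ij} = invfac(i − j + λ̄_j)` (indices `1 ≤ i,j ≤ k`,
here realized with `0`-based `Fin k` indices) is nonsingular. -/
theorem matrix_C_nonsingular (k : ℕ) (hk : 1 ≤ k) (lam : ℕ → ℕ)
    (hdec : ∀ j, 1 ≤ j → j < k → lam (j + 1) ≤ lam j) :
    Matrix.det (Matrix.of fun i j : Fin k =>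
      invfac ((i : ℤ) - (j : ℤ) + (lam (j.1 + 1) : ℤ))) ≠ 0 := by
  have heq : (Matrix.of fun i j : Fin k =>
      invfac ((i : ℤ) - (j : ℤ) + (lam (j.1 + 1) : ℤ))) =
      Matrix.of fun i j : Fin k => invfac ((i : ℤ) + ((lam (j.1 + 1) : ℤ) - j.1)) := by
    ext i j
    simp only [Matrix.of_apply]
    congr 1
    omega
  rw [heq]
  refine main_aux k hk (fun j => (lam (j.1 + 1) : ℤ) - j.1) (fun j => by omega) ?_
  · intro j1 j2 h
    have hlam := lam_anti k lam hdec (j2.1 + 1) (j1.1 + 1) (by omega)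
      (by exact_mod_cast Nat.succ_le_succ h.le) (by have := j2.isLt; omega)
    have hv : j1.1 < j2.1 := h
    omega
end

section
/- Let μ_1 ≥ μ_2 ≥ … ≥ μ_t ≥ 1 be a partition with exactly t ≥ 1 parts, let s = μ_1, and let μ̄_j = #{i ∈ {1,…,t} : μ_i ≥ j} for 1 ≤ j ≤ s (the conjugate partition). Then ∏_{j=1}^{s}(j + t − μ̄_j) · ∏_{i=1}^{t}(μ_i + t + 1 − i) = (s+t)!. -/
/-- The Subclaim in the proof of Lemma 5.12: for a partition `μ_1 ≥ … ≥ μ_t ≥ 1`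
with `t ≥ 1` parts, `s = μ_1`, and conjugate partition `μ̄_j = #{i : μ_i ≥ j}`,
one has `∏_{j=1}^{s} (j + t − μ̄_j) · ∏_{i=1}^{t} (μ_i + t + 1 − i) = (s+t)!`. -/
theorem hook_product_identity (t : ℕ) (ht : 1 ≤ t) (mu : ℕ → ℕ)
    (hdec : ∀ i, 1 ≤ i → i < t → mu (i + 1) ≤ mu i) (hpos : 1 ≤ mu t) :
    (∏ j ∈ Finset.Icc 1 (mu 1),
        (j + t - ((Finset.Icc 1 t).filter (fun i => j ≤ mu i)).card)) *
      (∏ i ∈ Finset.Icc 1 t, (mu i + t + 1 - i)) = (mu 1 + t).factorial := by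
  classical
  set s := mu 1 with hs
  set c : ℕ → ℕ := fun j => ((Finset.Icc 1 t).filter (fun i => j ≤ mu i)).card with hc
  -- monotonicity of mu on [1, t]
  have mono : ∀ i i' : ℕ, 1 ≤ i → i ≤ i' → i' ≤ t → mu i' ≤ mu i := by
    intro i i' h1 h2 h3
    induction i' with
    | zero => omega
    | succ n ih =>
      rcases Nat.eq_or_lt_of_le h2 with h | h
      · rw [h]
      · exact (hdec n (by omega) (by omega)).trans (ih (by omega) (by omega))
  have hposall : ∀ i, 1 ≤ i → i ≤ t → 1 ≤ mu i := fun i h1 h2 =>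
    le_trans hpos (mono i t h1 h2 le_rfl)
  have key1 : ∀ i j, 1 ≤ i → i ≤ t → j ≤ mu i → i ≤ c j := by
    intro i j h1 h2 h3
    have hsub : Finset.Icc 1 i ⊆ (Finset.Icc 1 t).filter (fun k => j ≤ mu k) := by
      intro k hk
      simp only [Finset.mem_Icc] at hk
      simp only [Finset.mem_filter, Finset.mem_Icc]
      exact ⟨⟨hk.1, hk.2.trans h2⟩, h3.trans (mono k i hk.1 hk.2 h2)⟩
    have := Finset.card_le_card hsub
    simpa [Nat.card_Icc] using this
  have key2 : ∀ i j, 1 ≤ i → i ≤ t → mu i < j → c j < i := by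
    intro i j h1 h2 h3
    have hsub : (Finset.Icc 1 t).filter (fun i => j ≤ mu i) ⊆ Finset.Icc 1 (i - 1) := by
      intro k hk
      simp only [Finset.mem_filter, Finset.mem_Icc] at hk
      simp only [Finset.mem_Icc]
      refine ⟨hk.1.1, ?_⟩
      by_contra h
      push_neg at h
      have : mu k ≤ mu i := mono i k h1 (by omega) hk.1.2
      omega
    have := Finset.card_le_card hsub
    simp only [Nat.card_Icc] at this
    simp only [hc]
    omega
  have cle : ∀ j, c j ≤ t := by
    intro j
    have := Finset.card_le_card (Finset.filter_subset (fun i => j ≤ mu i) (Finset.Icc 1 t))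
    simpa [Nat.card_Icc] using this
  have cpos : ∀ j, 1 ≤ j → j ≤ s → 1 ≤ c j := fun j h1 h2 => key1 1 j le_rfl ht h2
  have canti : ∀ j j', j ≤ j' → c j' ≤ c j := by
    intro j j' h
    apply Finset.card_le_card
    intro k hk
    simp only [Finset.mem_filter] at hk ⊢
    exact ⟨hk.1, le_trans h hk.2⟩
  -- the two families of values
  set fA : ℕ → ℕ := fun i => mu i + t + 1 - i with hfA
  set fB : ℕ → ℕ := fun j => j + t - c j with hfB
  set A : Finset ℕ := (Finset.Icc 1 t).image fA with hA
  set B : Finset ℕ := (Finset.Icc 1 s).image fB with hB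
  have hAinj : ∀ a ∈ Finset.Icc 1 t, ∀ b ∈ Finset.Icc 1 t, fA a = fA b → a = b := by
    intro a ha b hb hab
    simp only [Finset.mem_Icc] at ha hb
    rcases lt_trichotomy a b with h | h | h
    · have := mono a b ha.1 h.le hb.2
      simp only [hfA] at hab; omega
    · exact h
    · have := mono b a hb.1 h.le ha.2
      simp only [hfA] at hab; omega
  have hBinj : ∀ a ∈ Finset.Icc 1 s, ∀ b ∈ Finset.Icc 1 s, fB a = fB b → a = b := by
    intro a ha b hb hab
    simp only [Finset.mem_Icc] at ha hb
    rcases lt_trichotomy a b with h | h | h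
    · have h1 := canti a b h.le
      have h2 := cle a
      simp only [hfB] at hab; omega
    · exact h
    · have h1 := canti b a h.le
      have h2 := cle b
      simp only [hfB] at hab; omega
  have hAsub : A ⊆ Finset.Icc 1 (s + t) := by
    intro x hx
    simp only [hA, Finset.mem_image, Finset.mem_Icc] at hx
    obtain ⟨i, hi, rfl⟩ := hx
    have h1 := mono 1 i le_rfl hi.1 hi.2
    simp only [Finset.mem_Icc, hfA]
    omega
  have hBsub : B ⊆ Finset.Icc 1 (s + t) := by
    intro x hx
    simp only [hB, Finset.mem_image, Finset.mem_Icc] at hx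
    obtain ⟨j, hj, rfl⟩ := hx
    have h1 := cle j
    have h2 := cpos j hj.1 hj.2
    simp only [Finset.mem_Icc, hfB]
    omega
  have hdisj : Disjoint A B := by
    rw [Finset.disjoint_left]
    intro x hxA hxB
    simp only [hA, hB, Finset.mem_image, Finset.mem_Icc] at hxA hxB
    obtain ⟨i, hi, rfl⟩ := hxA
    obtain ⟨j, hj, heq⟩ := hxB
    have h1 := cle j
    by_cases h : j ≤ mu i
    · have := key1 i j hi.1 hi.2 h
      simp only [hfA, hfB] at heq; omega
    · have := key2 i j hi.1 hi.2 (by omega)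
      simp only [hfA, hfB] at heq; omega
  have hcardA : A.card = t := by
    rw [hA, Finset.card_image_of_injOn (fun a ha b hb => hAinj a ha b hb), Nat.card_Icc]
    omega
  have hcardB : B.card = s := by
    rw [hB, Finset.card_image_of_injOn (fun a ha b hb => hBinj a ha b hb), Nat.card_Icc]
    omega
  have hunion : A ∪ B = Finset.Icc 1 (s + t) := by
    apply Finset.eq_of_subset_of_card_le (Finset.union_subset hAsub hBsub)
    rw [Finset.card_union_of_disjoint hdisj, hcardA, hcardB, Nat.card_Icc]
    omega
  have hprodA : (∏ i ∈ Finset.Icc 1 t, (mu i + t + 1 - i)) = ∏ x ∈ A, x := by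
    rw [hA, Finset.prod_image hAinj]
  have hprodB : (∏ j ∈ Finset.Icc 1 s,
      (j + t - ((Finset.Icc 1 t).filter (fun i => j ≤ mu i)).card)) = ∏ x ∈ B, x := by
    rw [hB, Finset.prod_image hBinj]
  rw [hprodB, hprodA, mul_comm, ← Finset.prod_union hdisj, hunion]
  have : Finset.Icc 1 (s + t) = Finset.Ico 1 (s + t + 1) := by
    rw [Nat.Icc_eq_range', Nat.Ico_eq_range']
  rw [this]
  exact Finset.prod_Ico_id_eq_factorial (s + t)
end
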